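/- Let m ∈ ℕ and define F_m(t) = 2·∑_{k=0}^{m} t^k/k! − e^t for t ≥ 0. Then F_m(t) ≤ 0 for all t ≥ m + log 2, and F_m(t) ≤ 2 e^m for all t ∈ [0, m + log 2]; hence sup_{t ≥ 0} F_m(t) ≤ 2 e^m. -/

import Mathlib

open Real Finset

namespace Stmt10

noncomputable def S (m : ℕ) (t : ℝ) : ℝ := ∑ k ∈ Finset.range (m+1), t ^ k / (Nat.factorial k : ℝ)
noncomputable def Ee (r : ℕ) : ℝ := ∑ i ∈ Finset.range (r+1), 1 / (Nat.factorial i : ℝ)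
noncomputable def de (r : ℕ) : ℝ := Real.exp 1 - Ee r
noncomputable def cc (m : ℕ) : ℝ := m + Real.log 2
noncomputable def q (m : ℕ) : ℝ := Real.exp (-(cc m)) * S m (cc m)

lemma S_nonneg (m : ℕ) {t : ℝ} (ht : 0 ≤ t) : 0 ≤ S m t := by
  apply Finset.sum_nonneg
  intro k _
  positivity

lemma S_le_exp (m : ℕ) {t : ℝ} (ht : 0 ≤ t) : S m t ≤ Real.exp t :=
  Real.sum_le_exp_of_nonneg ht (m+1)

lemma Ee_eq_S_one (r : ℕ) : Ee r = S r 1 := by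
  unfold Ee S; simp [one_pow]

lemma Ee_le_exp_one (r : ℕ) : Ee r ≤ Real.exp 1 := by
  rw [Ee_eq_S_one]; exact S_le_exp r zero_le_one

lemma de_nonneg (r : ℕ) : 0 ≤ de r := sub_nonneg.2 (Ee_le_exp_one r)

lemma Ee_succ (r : ℕ) : Ee (r+1) = Ee r + 1 / (Nat.factorial (r+1) : ℝ) := by
  unfold Ee; rw [Finset.sum_range_succ]

lemma de_succ (r : ℕ) : de (r+1) = de r - 1 / (Nat.factorial (r+1) : ℝ) := by
  unfold de; rw [Ee_succ]; ring

lemma de_ge (r : ℕ) : 1 / (Nat.factorial (r+1) : ℝ) + 1 / (Nat.factorial (r+2) : ℝ) ≤ de r := by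
  have h := Ee_le_exp_one (r+2)
  rw [Ee_succ, Ee_succ] at h
  unfold de
  linarith

lemma de_ub (r : ℕ) : de r ≤ ((r:ℝ)+2) / ((Nat.factorial (r+1) : ℝ) * ((r:ℝ)+1)) := by
  have h := Real.exp_bound (x := 1) (by norm_num) (n := r+1) (Nat.succ_pos r)
  simp only [one_pow, abs_one, one_mul, Nat.succ_eq_add_one] at h
  push_cast at h
  have h1 : de r ≤ |Real.exp 1 - Ee r| := le_abs_self _
  have e : ((r:ℝ)+2) = ((r:ℝ)+1+1) := by ring
  rw [e]
  calc de r ≤ |Real.exp 1 - Ee r| := le_abs_self _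
    _ ≤ _ := by unfold Ee; exact h

lemma sum_de (R : ℕ) :
    ∑ r ∈ Finset.range R, de (r+1)
      = 1 - 1 / (Nat.factorial (R+1) : ℝ) + R * de (R+1) := by
  induction R with
  | zero => simp [Nat.factorial]
  | succ R ih =>
    rw [Finset.sum_range_succ, ih, de_succ (R+1)]
    have h1 : (Nat.factorial (R+2) : ℝ) = ((R:ℝ)+2) * (Nat.factorial (R+1) : ℝ) := by
      rw [show R+2 = (R+1)+1 from rfl, Nat.factorial_succ]
      push_cast; ring
    have h2 : (Nat.factorial (R+1) : ℝ) ≠ 0 := by positivity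
    have h3 : ((R:ℝ)+2) ≠ 0 := by positivity
    rw [h1]
    push_cast
    field_simp
    ring

lemma sum_de_le_one (m : ℕ) : ∑ r ∈ Finset.range (m+1), de (r+1) ≤ 1 := by
  rw [sum_de]
  have h1 : ((m:ℝ)+1) * de (m+2) ≤ 1 / (Nat.factorial (m+2) : ℝ) := by
    have h := de_ub (m+2)
    have hf3 : (Nat.factorial (m+3) : ℝ) = ((m:ℝ)+3) * (Nat.factorial (m+2) : ℝ) := by
      rw [show m+3 = (m+2)+1 from rfl, Nat.factorial_succ]; push_cast; ring
    have hpos : (0:ℝ) < (Nat.factorial (m+2) : ℝ) := by positivity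
    have hub : de (m+2) ≤ ((m:ℝ)+4) / (((m:ℝ)+3) * (Nat.factorial (m+2) : ℝ) * ((m:ℝ)+3)) := by
      calc de (m+2) ≤ ((m:ℝ)+2+2) / ((Nat.factorial (m+2+1) : ℝ) * ((m:ℝ)+2+1)) := by
            have := de_ub (m+2); push_cast at this ⊢; convert this using 2 <;> ring_nf
        _ = ((m:ℝ)+4) / (((m:ℝ)+3) * (Nat.factorial (m+2) : ℝ) * ((m:ℝ)+3)) := by
            rw [show m+2+1 = m+3 from rfl, hf3]; ring_nf
    have key : ((m:ℝ)+1) * (((m:ℝ)+4) / (((m:ℝ)+3) * (Nat.factorial (m+2) : ℝ) * ((m:ℝ)+3)))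
        ≤ 1 / (Nat.factorial (m+2) : ℝ) := by
      rw [mul_div_assoc', div_le_div_iff₀ (by positivity) hpos]
      have h5 : ((m:ℝ)+1) * ((m:ℝ)+4) ≤ ((m:ℝ)+3) * ((m:ℝ)+3) := by nlinarith [sq_nonneg ((m:ℝ))]
      nlinarith [mul_le_mul_of_nonneg_right h5 hpos.le]
    calc ((m:ℝ)+1) * de (m+2) ≤ ((m:ℝ)+1) * (((m:ℝ)+4) / (((m:ℝ)+3) * (Nat.factorial (m+2) : ℝ) * ((m:ℝ)+3))) := by
          apply mul_le_mul_of_nonneg_left hub (by positivity)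
      _ ≤ _ := key
  have h2 : (0:ℝ) ≤ 1 / (Nat.factorial (m+1+1) : ℝ) := by positivity
  push_cast
  push_cast at h1
  linarith

lemma de2_lb : (5:ℝ)/24 ≤ de 2 := by
  have h := de_ge 2; norm_num [Nat.factorial] at h; linarith
lemma de3_lb : (1:ℝ)/20 ≤ de 3 := by
  have h := de_ge 3; norm_num [Nat.factorial] at h; linarith
lemma de4_lb : (7:ℝ)/720 ≤ de 4 := by
  have h := de_ge 4; norm_num [Nat.factorial] at h; linarith
lemma de5_lb : (1:ℝ)/630 ≤ de 5 := by
  have h := de_ge 5; norm_num [Nat.factorial] at h; linarith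

lemma fac_prod (b : ℕ) : ∀ w : ℕ,
    (Nat.factorial (b + w) : ℝ) = (Nat.factorial b : ℝ) * ∏ i ∈ Finset.range w, ((b:ℝ)+1+i)
  | 0 => by simp
  | (w+1) => by
    rw [Finset.prod_range_succ, ← mul_assoc, ← fac_prod b w,
      show b + (w+1) = (b+w)+1 from rfl, Nat.factorial_succ]
    push_cast; ring

lemma S_shift (x : ℝ) (hx : 0 ≤ x) : ∀ M : ℕ,
    S M (x+1) = ∑ j ∈ Finset.range (M+1), x^j/(Nat.factorial j : ℝ) * Ee (M - j)
  | 0 => by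
    unfold S Ee; simp [Nat.factorial]
  | (M+1) => by
    have ih := S_shift x hx M
    have hS : S (M+1) (x+1) = S M (x+1) + (x+1)^(M+1)/(Nat.factorial (M+1) : ℝ) := by
      unfold S; rw [Finset.sum_range_succ]
    have hsplit : ∑ j ∈ Finset.range (M+2), x^j/(Nat.factorial j : ℝ) * Ee (M+1-j)
        = (∑ j ∈ Finset.range (M+1), x^j/(Nat.factorial j : ℝ) * Ee (M-j))
          + ((∑ j ∈ Finset.range (M+1), x^j/((Nat.factorial j : ℝ) * (Nat.factorial (M+1-j) : ℝ)))
          + x^(M+1)/(Nat.factorial (M+1) : ℝ)) := by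
      rw [Finset.sum_range_succ]
      have h1 : ∀ j ∈ Finset.range (M+1), x^j/(Nat.factorial j : ℝ) * Ee (M+1-j)
          = x^j/(Nat.factorial j : ℝ) * Ee (M-j)
            + x^j/((Nat.factorial j : ℝ) * (Nat.factorial (M+1-j) : ℝ)) := by
        intro j hj
        have hjM : j ≤ M := Nat.lt_succ_iff.mp (Finset.mem_range.mp hj)
        have h2 : M+1-j = (M-j)+1 := by omega
        rw [h2, Ee_succ]
        have : (0:ℝ) < (Nat.factorial j : ℝ) := by positivity
        have : (0:ℝ) < (Nat.factorial (M-j+1) : ℝ) := by positivity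
        field_simp
      rw [Finset.sum_congr rfl h1, Finset.sum_add_distrib]
      have : Ee (M+1-(M+1)) = 1 := by norm_num [Ee, Nat.factorial]
      rw [this]
      ring
    have hbin : (x+1)^(M+1)/(Nat.factorial (M+1) : ℝ)
        = (∑ j ∈ Finset.range (M+1), x^j/((Nat.factorial j : ℝ) * (Nat.factorial (M+1-j) : ℝ)))
          + x^(M+1)/(Nat.factorial (M+1) : ℝ) := by
      rw [add_pow]
      rw [Finset.sum_div]
      have h1 : ∀ j ∈ Finset.range (M+2),
          x ^ j * 1 ^ (M+1-j) * (Nat.choose (M+1) j : ℝ) / (Nat.factorial (M+1) : ℝ)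
          = x^j/((Nat.factorial j : ℝ) * (Nat.factorial (M+1-j) : ℝ)) := by
        intro j hj
        have hjM : j ≤ M+1 := Nat.lt_succ_iff.mp (Finset.mem_range.mp hj)
        have hc : (Nat.choose (M+1) j : ℝ) * ((Nat.factorial j : ℝ) * (Nat.factorial (M+1-j) : ℝ))
            = (Nat.factorial (M+1) : ℝ) := by
          have := Nat.choose_mul_factorial_mul_factorial hjM
          push_cast [← this]
          ring
        have hp1 : (0:ℝ) < (Nat.factorial j : ℝ) := by positivity
        have hp2 : (0:ℝ) < (Nat.factorial (M+1-j) : ℝ) := by positivity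
        have hp3 : (0:ℝ) < (Nat.factorial (M+1) : ℝ) := by positivity
        rw [one_pow, mul_one]
        rw [div_eq_div_iff hp3.ne' (by positivity : ((Nat.factorial j : ℝ) * (Nat.factorial (M+1-j) : ℝ)) ≠ 0), ← hc]
        ring
      rw [Finset.sum_congr rfl h1, Finset.sum_range_succ, Nat.sub_self]
      norm_num [Nat.factorial]
    rw [hS, ih, hsplit, hbin]

set_option maxHeartbeats 2000000 in
lemma poly_key (k : ℕ) :
    (Real.log 2 + ((k:ℝ)+5))^(k+5)/(Nat.factorial (k+5) : ℝ)
      - ((5/24) * ((Real.log 2 + ((k:ℝ)+5))^(k+5)/(Nat.factorial (k+5) : ℝ)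
            - (Real.log 2 + ((k:ℝ)+5))^(k+4)/(Nat.factorial (k+4) : ℝ))
        + (1/20) * ((Real.log 2 + ((k:ℝ)+5))^(k+5)/(Nat.factorial (k+5) : ℝ)
            - (Real.log 2 + ((k:ℝ)+5))^(k+3)/(Nat.factorial (k+3) : ℝ))
        + (7/720) * ((Real.log 2 + ((k:ℝ)+5))^(k+5)/(Nat.factorial (k+5) : ℝ)
            - (Real.log 2 + ((k:ℝ)+5))^(k+2)/(Nat.factorial (k+2) : ℝ))
        + (1/630) * ((Real.log 2 + ((k:ℝ)+5))^(k+5)/(Nat.factorial (k+5) : ℝ)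
            - (Real.log 2 + ((k:ℝ)+5))^(k+1)/(Nat.factorial (k+1) : ℝ)))
    ≤ (Real.log 2 + ((k:ℝ)+5))^(k+6)/(Nat.factorial (k+6) : ℝ) := by
  set K : ℝ := (k:ℝ) with hKdef
  set c : ℝ := Real.log 2 + ((k:ℝ)+5) with hcdef
  have hK : (0:ℝ) ≤ K := Nat.cast_nonneg k
  obtain ⟨t, ht, hlog⟩ : ∃ t:ℝ, 0 ≤ t ∧ Real.log 2 = 0.6931471803 + t :=
    ⟨Real.log 2 - 0.6931471803, by linarith [Real.log_two_gt_d9], by ring⟩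
  have hc' : c = K + 5 + (0.6931471803 + t) := by rw [hcdef, hlog]; ring
  have f2 : (Nat.factorial (k+2) : ℝ) = (K+2) * (Nat.factorial (k+1) : ℝ) := by
    rw [show k+2 = (k+1)+1 from rfl, Nat.factorial_succ]; push_cast; ring
  have f3 : (Nat.factorial (k+3) : ℝ) = (K+3)*(K+2) * (Nat.factorial (k+1) : ℝ) := by
    rw [show k+3 = (k+2)+1 from rfl, Nat.factorial_succ]; push_cast [f2]; ring
  have f4 : (Nat.factorial (k+4) : ℝ) = (K+4)*(K+3)*(K+2) * (Nat.factorial (k+1) : ℝ) := by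
    rw [show k+4 = (k+3)+1 from rfl, Nat.factorial_succ]; push_cast [f3]; ring
  have f5 : (Nat.factorial (k+5) : ℝ) = (K+5)*(K+4)*(K+3)*(K+2) * (Nat.factorial (k+1) : ℝ) := by
    rw [show k+5 = (k+4)+1 from rfl, Nat.factorial_succ]; push_cast [f4]; ring
  have f6 : (Nat.factorial (k+6) : ℝ) = (K+6)*(K+5)*(K+4)*(K+3)*(K+2) * (Nat.factorial (k+1) : ℝ) := by
    rw [show k+6 = (k+5)+1 from rfl, Nat.factorial_succ]; push_cast [f5]; ring
  have hF : (0:ℝ) < (Nat.factorial (k+1) : ℝ) := by positivity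
  have hW : (0:ℝ) ≤ (-8/7:ℝ) + (-7/2:ℝ) * c^1 + (-6:ℝ) * c^2 + (-25/4:ℝ) * c^3 + (-1227/280:ℝ) * c^4 + (1:ℝ) * c^5 + (-58/35:ℝ) * K^1 + (-133/40:ℝ) * K^1 * c^1 + (-37/10:ℝ) * K^1 * c^2 + (-55/24:ℝ) * K^1 * c^3 + (-409/560:ℝ) * K^1 * c^4 + (-58/63:ℝ) * K^2 + (-833/720:ℝ) * K^2 * c^1 + (-3/4:ℝ) * K^2 * c^2 + (-5/24:ℝ) * K^2 * c^3 + (-31/126:ℝ) * K^3 + (-7/40:ℝ) * K^3 * c^1 + (-1/20:ℝ) * K^3 * c^2 + (-2/63:ℝ) * K^4 + (-7/720:ℝ) * K^4 * c^1 + (-1/630:ℝ) * K^5 := by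
    have expand : ((-8/7:ℝ) + (-7/2:ℝ) * c^1 + (-6:ℝ) * c^2 + (-25/4:ℝ) * c^3 + (-1227/280:ℝ) * c^4 + (1:ℝ) * c^5 + (-58/35:ℝ) * K^1 + (-133/40:ℝ) * K^1 * c^1 + (-37/10:ℝ) * K^1 * c^2 + (-55/24:ℝ) * K^1 * c^3 + (-409/560:ℝ) * K^1 * c^4 + (-58/63:ℝ) * K^2 + (-833/720:ℝ) * K^2 * c^1 + (-3/4:ℝ) * K^2 * c^2 + (-5/24:ℝ) * K^2 * c^3 + (-31/126:ℝ) * K^3 + (-7/40:ℝ) * K^3 * c^1 + (-1/20:ℝ) * K^3 * c^2 + (-2/63:ℝ) * K^4 + (-7/720:ℝ) * K^4 * c^1 + (-1/630:ℝ) * K^5) = (842609856807985708989261833905261431178879590879243/100000000000000000000000000000000000000000000000000:ℝ) + (18741076285522978123540740966770698881401367/14000000000000000000000000000000000000000:ℝ) * t^1 + (616216975652188500821437522290389/700000000000000000000000000000:ℝ) * t^2 + (15265355781362388495663/70000000000000000000:ℝ) * t^3 + (337170302621/14000000000:ℝ) * t^4 + (1:ℝ) * t^5 + (134423228250518888274419533297720691384572213/16800000000000000000000000000000000000000000:ℝ)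 * K^1 + (133455636069757595625178656106617157/140000000000000000000000000000000:ℝ) * K^1 * t^1 + (13141952930435469139912957/28000000000000000000000:ℝ) * K^1 * t^2 + (325124447242919/4200000000000:ℝ) * K^1 * t^3 + (2391/560:ℝ) * K^1 * t^4 + (2255784250707056642904360583976417/840000000000000000000000000000000:ℝ) * K^2 + (64140872516363388853748651/252000000000000000000000:ℝ) * K^2 * t^1 + (233581523775113/2800000000000:ℝ) * K^2 * t^2 + (5771/840:ℝ) * K^2 * t^3 + (4046621333704432749871/10500000000000000000000:ℝ) * K^3 + (5285394621919/175000000000:ℝ) * K^3 * t^1 + (173/35:ℝ) * K^3 * t^2 + (112984280191/5600000000000:ℝ) * K^4 + (6773/5040:ℝ) * K^4 * t^1 := by rw [hc']; ring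
    rw [expand]
    have hmono : ∀ i j : ℕ, (0:ℝ) ≤ K^i * t^j := fun i j =>
      mul_nonneg (pow_nonneg hK i) (pow_nonneg ht j)
    linarith [hmono 1 0, hmono 2 0, hmono 3 0, hmono 4 0, hmono 0 1, hmono 0 2,
      hmono 0 3, hmono 0 4, hmono 0 5, hmono 1 1, hmono 1 2, hmono 1 3, hmono 1 4,
      hmono 2 1, hmono 2 2, hmono 2 3, hmono 3 1, hmono 3 2, hmono 4 1]
  have hcpos : (0:ℝ) < c := by rw [hc']; linarith
  have key : (0:ℝ) ≤ c^(k+1)/(Nat.factorial (k+1) : ℝ)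
      * ((-8/7:ℝ) + (-7/2:ℝ) * c^1 + (-6:ℝ) * c^2 + (-25/4:ℝ) * c^3 + (-1227/280:ℝ) * c^4 + (1:ℝ) * c^5 + (-58/35:ℝ) * K^1 + (-133/40:ℝ) * K^1 * c^1 + (-37/10:ℝ) * K^1 * c^2 + (-55/24:ℝ) * K^1 * c^3 + (-409/560:ℝ) * K^1 * c^4 + (-58/63:ℝ) * K^2 + (-833/720:ℝ) * K^2 * c^1 + (-3/4:ℝ) * K^2 * c^2 + (-5/24:ℝ) * K^2 * c^3 + (-31/126:ℝ) * K^3 + (-7/40:ℝ) * K^3 * c^1 + (-1/20:ℝ) * K^3 * c^2 + (-2/63:ℝ) * K^4 + (-7/720:ℝ) * K^4 * c^1 + (-1/630:ℝ) * K^5) / ((K+2)*(K+3)*(K+4)*(K+5)*(K+6)) := by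
    apply div_nonneg (mul_nonneg (by positivity) hW) (by positivity)
  have hid : c^(k+6)/(Nat.factorial (k+6) : ℝ)
      - (c^(k+5)/(Nat.factorial (k+5) : ℝ)
      - ((5/24) * (c^(k+5)/(Nat.factorial (k+5) : ℝ) - c^(k+4)/(Nat.factorial (k+4) : ℝ))
        + (1/20) * (c^(k+5)/(Nat.factorial (k+5) : ℝ) - c^(k+3)/(Nat.factorial (k+3) : ℝ))
        + (7/720) * (c^(k+5)/(Nat.factorial (k+5) : ℝ) - c^(k+2)/(Nat.factorial (k+2) : ℝ))
        + (1/630) * (c^(k+5)/(Nat.factorial (k+5) : ℝ) - c^(k+1)/(Nat.factorial (k+1) : ℝ))))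
      = c^(k+1)/(Nat.factorial (k+1) : ℝ)
      * ((-8/7:ℝ) + (-7/2:ℝ) * c^1 + (-6:ℝ) * c^2 + (-25/4:ℝ) * c^3 + (-1227/280:ℝ) * c^4 + (1:ℝ) * c^5 + (-58/35:ℝ) * K^1 + (-133/40:ℝ) * K^1 * c^1 + (-37/10:ℝ) * K^1 * c^2 + (-55/24:ℝ) * K^1 * c^3 + (-409/560:ℝ) * K^1 * c^4 + (-58/63:ℝ) * K^2 + (-833/720:ℝ) * K^2 * c^1 + (-3/4:ℝ) * K^2 * c^2 + (-5/24:ℝ) * K^2 * c^3 + (-31/126:ℝ) * K^3 + (-7/40:ℝ) * K^3 * c^1 + (-1/20:ℝ) * K^3 * c^2 + (-2/63:ℝ) * K^4 + (-7/720:ℝ) * K^4 * c^1 + (-1/630:ℝ) * K^5) / ((K+2)*(K+3)*(K+4)*(K+5)*(K+6)) := by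
    rw [f6, f5, f4, f3, f2]
    have e2 : c^(k+2) = c^(k+1)*c := by ring
    have e3 : c^(k+3) = c^(k+1)*c^2 := by ring
    have e4 : c^(k+4) = c^(k+1)*c^3 := by ring
    have e5 : c^(k+5) = c^(k+1)*c^4 := by ring
    have e6 : c^(k+6) = c^(k+1)*c^5 := by ring
    rw [e2, e3, e4, e5, e6]
    field_simp
    ring
  linarith [key, hid.ge, hid.le]

lemma cc_nonneg (m : ℕ) : 0 ≤ cc m := by
  unfold cc
  have := Real.log_two_gt_d9
  positivity

lemma cc_ge (m : ℕ) : (m:ℝ) ≤ cc m := by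
  unfold cc
  have := Real.log_two_gt_d9
  linarith

lemma term_le_top (c : ℝ) : ∀ m : ℕ, (m:ℝ) ≤ c → ∀ j ≤ m,
    c^j/(Nat.factorial j : ℝ) ≤ c^m/(Nat.factorial m : ℝ)
  | 0 => by intro _ j hj; interval_cases j; simp
  | (m+1) => by
    intro hc j hj
    have hc0 : (0:ℝ) ≤ c := le_trans (by positivity) hc
    rcases Nat.lt_succ_iff_lt_or_eq.mp (Nat.lt_succ_of_le hj) with h | h
    · have hm : (m:ℝ) ≤ c := by push_cast at hc ⊢; linarith
      have step : c^m/(Nat.factorial m : ℝ) ≤ c^(m+1)/(Nat.factorial (m+1) : ℝ) := by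
        rw [Nat.factorial_succ, div_le_div_iff₀ (by positivity) (by positivity)]
        push_cast
        have h1 : c^(m+1) = c * c^m := by ring
        rw [h1]
        have h2 : (0:ℝ) ≤ c^m * (Nat.factorial m : ℝ) := by positivity
        have h3 : ((m:ℝ)+1) ≤ c := by push_cast at hc; linarith
        nlinarith [h2, h3]
      exact le_trans (term_le_top c m hm j (Nat.lt_succ_iff.mp h)) step
    · subst h; exact le_rfl

lemma q_step (k : ℕ) : q (k+5) ≤ q (k+5+1) := by
  have hc0 : 0 ≤ cc (k+5) := cc_nonneg _
  have hcg : ((k+5:ℕ):ℝ) ≤ cc (k+5) := cc_ge _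
  set c : ℝ := cc (k+5) with hcdef
  -- key sum bound
  have key : ∑ j ∈ Finset.range (k+5+1), c^j/(Nat.factorial j : ℝ) * de (k+5+1-j)
      ≤ c^(k+5+1)/(Nat.factorial (k+5+1) : ℝ) := by
    -- reflect
    have refl : ∑ j ∈ Finset.range (k+5+1), c^j/(Nat.factorial j : ℝ) * de (k+5+1-j)
        = ∑ r ∈ Finset.range (k+5+1), c^(k+5-r)/(Nat.factorial (k+5-r) : ℝ) * de (r+1) := by
      rw [← Finset.sum_range_reflect]
      apply Finset.sum_congr rfl
      intro r hr
      have hrm : r ≤ k+5 := Nat.lt_succ_iff.mp (Finset.mem_range.mp hr)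
      have h1 : k+5+1-1-r = k+5-r := by omega
      have h2 : k+5+1-(k+5-r) = r+1 := by omega
      rw [h1, h2]
    rw [refl]
    have split : ∀ r ∈ Finset.range (k+5+1),
        c^(k+5-r)/(Nat.factorial (k+5-r) : ℝ) * de (r+1)
        = c^(k+5)/(Nat.factorial (k+5) : ℝ) * de (r+1)
          - (c^(k+5)/(Nat.factorial (k+5) : ℝ) - c^(k+5-r)/(Nat.factorial (k+5-r) : ℝ)) * de (r+1) := by
      intro r _; ring
    rw [Finset.sum_congr rfl split, Finset.sum_sub_distrib]
    have htop : ∀ r : ℕ, r ≤ k+5 → c^(k+5-r)/(Nat.factorial (k+5-r) : ℝ)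
        ≤ c^(k+5)/(Nat.factorial (k+5) : ℝ) := by
      intro r hr
      exact term_le_top c (k+5) (by exact_mod_cast hcg) (k+5-r) (by omega)
    -- first sum ≤ h1
    have hA : ∑ r ∈ Finset.range (k+5+1), c^(k+5)/(Nat.factorial (k+5) : ℝ) * de (r+1)
        ≤ c^(k+5)/(Nat.factorial (k+5) : ℝ) := by
      rw [← Finset.mul_sum]
      have := sum_de_le_one (k+5)
      have hpos : (0:ℝ) ≤ c^(k+5)/(Nat.factorial (k+5) : ℝ) := by positivity
      nlinarith [Finset.sum_nonneg (fun r (_ : r ∈ Finset.range (k+5+1)) => de_nonneg (r+1))]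
    -- second sum ≥ four terms
    have hB : ((5:ℝ)/24) * (c^(k+5)/(Nat.factorial (k+5) : ℝ) - c^(k+4)/(Nat.factorial (k+4) : ℝ))
        + (1/20) * (c^(k+5)/(Nat.factorial (k+5) : ℝ) - c^(k+3)/(Nat.factorial (k+3) : ℝ))
        + (7/720) * (c^(k+5)/(Nat.factorial (k+5) : ℝ) - c^(k+2)/(Nat.factorial (k+2) : ℝ))
        + (1/630) * (c^(k+5)/(Nat.factorial (k+5) : ℝ) - c^(k+1)/(Nat.factorial (k+1) : ℝ))
        ≤ ∑ r ∈ Finset.range (k+5+1),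
            (c^(k+5)/(Nat.factorial (k+5) : ℝ) - c^(k+5-r)/(Nat.factorial (k+5-r) : ℝ)) * de (r+1) := by
      have hsub : ({1,2,3,4} : Finset ℕ) ⊆ Finset.range (k+5+1) := by
        intro x hx; fin_cases hx <;> simp <;> omega
      have hnn : ∀ r ∈ Finset.range (k+5+1), r ∉ ({1,2,3,4} : Finset ℕ) →
          0 ≤ (c^(k+5)/(Nat.factorial (k+5) : ℝ) - c^(k+5-r)/(Nat.factorial (k+5-r) : ℝ)) * de (r+1) := by
        intro r hr _
        have hrm : r ≤ k+5 := Nat.lt_succ_iff.mp (Finset.mem_range.mp hr)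
        exact mul_nonneg (sub_nonneg.2 (htop r hrm)) (de_nonneg _)
      have hstep := Finset.sum_le_sum_of_subset_of_nonneg hsub hnn
      have hsum4 : ∑ r ∈ ({1,2,3,4} : Finset ℕ),
          (c^(k+5)/(Nat.factorial (k+5) : ℝ) - c^(k+5-r)/(Nat.factorial (k+5-r) : ℝ)) * de (r+1)
          = (c^(k+5)/(Nat.factorial (k+5) : ℝ) - c^(k+4)/(Nat.factorial (k+4) : ℝ)) * de 2
          + (c^(k+5)/(Nat.factorial (k+5) : ℝ) - c^(k+3)/(Nat.factorial (k+3) : ℝ)) * de 3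
          + (c^(k+5)/(Nat.factorial (k+5) : ℝ) - c^(k+2)/(Nat.factorial (k+2) : ℝ)) * de 4
          + (c^(k+5)/(Nat.factorial (k+5) : ℝ) - c^(k+1)/(Nat.factorial (k+1) : ℝ)) * de 5 := by
        rw [show ({1,2,3,4} : Finset ℕ) = {1} ∪ {2} ∪ {3} ∪ {4} from rfl]
        rw [Finset.sum_union (by decide), Finset.sum_union (by decide), Finset.sum_union (by decide)]
        simp only [Finset.sum_singleton]
        have e1 : k+5-1 = k+4 := by omega
        have e2 : k+5-2 = k+3 := by omega
        have e3 : k+5-3 = k+2 := by omega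
        have e4 : k+5-4 = k+1 := by omega
        rw [e1, e2, e3, e4]
      have hterms : ((5:ℝ)/24) * (c^(k+5)/(Nat.factorial (k+5) : ℝ) - c^(k+4)/(Nat.factorial (k+4) : ℝ))
          + (1/20) * (c^(k+5)/(Nat.factorial (k+5) : ℝ) - c^(k+3)/(Nat.factorial (k+3) : ℝ))
          + (7/720) * (c^(k+5)/(Nat.factorial (k+5) : ℝ) - c^(k+2)/(Nat.factorial (k+2) : ℝ))
          + (1/630) * (c^(k+5)/(Nat.factorial (k+5) : ℝ) - c^(k+1)/(Nat.factorial (k+1) : ℝ))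
          ≤ ∑ r ∈ ({1,2,3,4} : Finset ℕ),
            (c^(k+5)/(Nat.factorial (k+5) : ℝ) - c^(k+5-r)/(Nat.factorial (k+5-r) : ℝ)) * de (r+1) := by
        rw [hsum4]
        have g1 : 0 ≤ c^(k+5)/(Nat.factorial (k+5) : ℝ) - c^(k+4)/(Nat.factorial (k+4) : ℝ) := by
          have := htop 1 (by omega); have e : k+5-1 = k+4 := by omega
          rw [e] at this; linarith
        have g2 : 0 ≤ c^(k+5)/(Nat.factorial (k+5) : ℝ) - c^(k+3)/(Nat.factorial (k+3) : ℝ) := by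
          have := htop 2 (by omega); have e : k+5-2 = k+3 := by omega
          rw [e] at this; linarith
        have g3 : 0 ≤ c^(k+5)/(Nat.factorial (k+5) : ℝ) - c^(k+2)/(Nat.factorial (k+2) : ℝ) := by
          have := htop 3 (by omega); have e : k+5-3 = k+2 := by omega
          rw [e] at this; linarith
        have g4 : 0 ≤ c^(k+5)/(Nat.factorial (k+5) : ℝ) - c^(k+1)/(Nat.factorial (k+1) : ℝ) := by
          have := htop 4 (by omega); have e : k+5-4 = k+1 := by omega
          rw [e] at this; linarith
        nlinarith [mul_le_mul_of_nonneg_left de2_lb g1, mul_le_mul_of_nonneg_left de3_lb g2,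
          mul_le_mul_of_nonneg_left de4_lb g3, mul_le_mul_of_nonneg_left de5_lb g4]
      linarith
    have hpoly := poly_key k
    have hcc : c = Real.log 2 + ((k:ℝ)+5) := by rw [hcdef]; unfold cc; push_cast; ring
    rw [← hcc] at hpoly
    linarith
  -- now assemble the step
  have hshift : S (k+5+1) (c + 1)
      = ∑ j ∈ Finset.range (k+5+2), c^j/(Nat.factorial j : ℝ) * Ee (k+5+1-j) :=
    S_shift c hc0 (k+5+1)
  have hexpand : S (k+5+1) (c + 1)
      = Real.exp 1 * S (k+5) c
        - (∑ j ∈ Finset.range (k+5+1), c^j/(Nat.factorial j : ℝ) * de (k+5+1-j))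
        + c^(k+5+1)/(Nat.factorial (k+5+1) : ℝ) := by
    rw [hshift, Finset.sum_range_succ, Nat.sub_self]
    have hEe0 : Ee 0 = 1 := by norm_num [Ee, Nat.factorial]
    rw [hEe0, mul_one]
    have hsplit : ∀ j ∈ Finset.range (k+5+1),
        c^j/(Nat.factorial j : ℝ) * Ee (k+5+1-j)
        = Real.exp 1 * (c^j/(Nat.factorial j : ℝ))
          - c^j/(Nat.factorial j : ℝ) * de (k+5+1-j) := by
      intro j _; unfold de; ring
    rw [Finset.sum_congr rfl hsplit, Finset.sum_sub_distrib, ← Finset.mul_sum]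
    unfold S
    ring
  have hge : Real.exp 1 * S (k+5) c ≤ S (k+5+1) (c + 1) := by
    rw [hexpand]; linarith
  -- q relation
  have hc1 : cc (k+5+1) = c + 1 := by rw [hcdef]; unfold cc; push_cast; ring
  unfold q
  rw [hc1, ← hcdef]
  have hexp : Real.exp (-(c+1)) * Real.exp 1 = Real.exp (-c) := by
    rw [← Real.exp_add]; ring_nf
  calc Real.exp (-c) * S (k+5) c
      = Real.exp (-(c+1)) * (Real.exp 1 * S (k+5) c) := by rw [← hexp]; ring
    _ ≤ Real.exp (-(c+1)) * S (k+5+1) (c+1) := by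
        apply mul_le_mul_of_nonneg_left hge (le_of_lt (Real.exp_pos _))

lemma sum_cast_id (w : ℕ) : ∑ i ∈ Finset.range w, (i:ℝ) = (w:ℝ)*((w:ℝ)-1)/2 := by
  induction w with
  | zero => simp
  | succ w ih => rw [Finset.sum_range_succ, ih]; push_cast; ring

lemma hasDerivAt_S (m : ℕ) (t : ℝ) :
    HasDerivAt (fun t : ℝ => S m t) (∑ k ∈ Finset.range m, t^k/(Nat.factorial k : ℝ)) t := by
  have h : HasDerivAt (fun t : ℝ => S m t)
      (∑ k ∈ Finset.range (m+1), (k:ℝ)*t^(k-1)/(Nat.factorial k : ℝ)) t := by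
    unfold S
    apply HasDerivAt.fun_sum
    intro k _
    exact (hasDerivAt_pow k t).div_const _
  convert h using 1
  rw [Finset.sum_range_succ']
  simp only [Nat.cast_zero, zero_mul, zero_div, add_zero]
  apply Finset.sum_congr rfl
  intro i _
  rw [Nat.factorial_succ]
  have h1 : (0:ℝ) < (Nat.factorial i : ℝ) := by positivity
  have h2 : i+1-1 = i := by omega
  rw [h2]
  push_cast
  field_simp

lemma expS_antitone (m : ℕ) {t1 t2 : ℝ} (h0 : 0 ≤ t1) (h12 : t1 ≤ t2) :
    Real.exp (-t2) * S m t2 ≤ Real.exp (-t1) * S m t1 := by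
  set g : ℝ → ℝ := fun t => Real.exp (-t) * S m t with hg
  have hderiv : ∀ t : ℝ, HasDerivAt g (-(Real.exp (-t) * (t^m/(Nat.factorial m : ℝ)))) t := by
    intro t
    have h2 : HasDerivAt (fun t:ℝ => Real.exp (-t)) (Real.exp (-t) * (-1)) t :=
      (Real.hasDerivAt_exp (-t)).comp t (hasDerivAt_neg t)
    have h3 := h2.mul (hasDerivAt_S m t)
    refine h3.congr_deriv ?_
    have hS : S m t = (∑ k ∈ Finset.range m, t^k/(Nat.factorial k : ℝ)) + t^m/(Nat.factorial m : ℝ) := by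
      unfold S; rw [Finset.sum_range_succ]
    rw [hS]
    ring
  have hdiff : Differentiable ℝ g := fun t => (hderiv t).differentiableAt
  have hanti : AntitoneOn g (Set.Ici (0:ℝ)) := by
    apply antitoneOn_of_deriv_nonpos (convex_Ici 0) hdiff.continuous.continuousOn
    · intro t _
      exact (hdiff t).differentiableWithinAt
    · intro t ht
      rw [interior_Ici] at ht
      rw [(hderiv t).deriv]
      have ht0 : (0:ℝ) ≤ t := le_of_lt ht
      have : (0:ℝ) ≤ Real.exp (-t) * (t^m/(Nat.factorial m : ℝ)) := by positivity
      linarith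
  exact hanti (Set.mem_Ici.mpr h0) (Set.mem_Ici.mpr (le_trans h0 h12)) h12

lemma gap (m : ℕ) (hm : 1 ≤ m) :
    -2 * (1 - Real.log 2) * ((cc m)^m/(Nat.factorial m : ℝ))
      ≤ Real.exp (cc m) - 2 * S m (cc m) := by
  set c : ℝ := cc m with hcdef
  have hcc : c = (m:ℝ) + Real.log 2 := by rw [hcdef]; unfold cc; ring
  have hL := Real.log_two_gt_d9
  have hL2 := Real.log_two_lt_d9
  have hc0 : 0 < c := by rw [hcc]; positivity
  -- (1) exp c ≥ S (2m+1) c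
  have h1 : S (m+(m+1)) c ≤ Real.exp c := S_le_exp _ hc0.le
  -- (2) split
  have h2 : S (m+(m+1)) c = S m c + ∑ j ∈ Finset.range (m+1), c^(m+1+j)/(Nat.factorial (m+1+j) : ℝ) := by
    unfold S
    rw [show m+(m+1)+1 = (m+1)+(m+1) from by omega, Finset.sum_range_add]
  -- (3) per-j lower bound on tail terms
  have h3 : ∀ j ∈ Finset.range (m+1),
      c^(m-j)/(Nat.factorial (m-j) : ℝ) * (1 - ((2*(j:ℝ)+1))*((m:ℝ)+1-c)/c)
        ≤ c^(m+1+j)/(Nat.factorial (m+1+j) : ℝ) := by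
    intro j hj
    have hjm : j ≤ m := Nat.lt_succ_iff.mp (Finset.mem_range.mp hj)
    set b : ℕ := m - j with hbdef
    set w : ℕ := 2*j+1 with hwdef
    have hbw : m+1+j = b + w := by omega
    have hfac : (Nat.factorial (b+w) : ℝ)
        = (Nat.factorial b : ℝ) * ∏ i ∈ Finset.range w, ((b:ℝ)+1+i) := fac_prod b w
    set x : ℝ := ((2*(j:ℝ)+1))*((m:ℝ)+1-c)/c with hxdef
    have hsum : ∑ i ∈ Finset.range w, (((b:ℝ)+1+(i:ℝ))/c - 1) = x := by
      have e1 : ∀ i ∈ Finset.range w, ((b:ℝ)+1+(i:ℝ))/c - 1 = ((b:ℝ)+1-c)/c + (i:ℝ)/c := by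
        intro i _; field_simp; ring
      rw [Finset.sum_congr rfl e1, Finset.sum_add_distrib, Finset.sum_const, Finset.card_range,
        nsmul_eq_mul, ← Finset.sum_div, sum_cast_id, hxdef]
      have hb : (b:ℝ) = (m:ℝ) - (j:ℝ) := by
        rw [hbdef]; push_cast [Nat.cast_sub hjm]; ring
      have hw : (w:ℝ) = 2*(j:ℝ)+1 := by rw [hwdef]; push_cast; ring
      rw [hb, hw]
      field_simp
      ring
    have hprod : ∏ i ∈ Finset.range w, (((b:ℝ)+1+(i:ℝ))/c) ≤ Real.exp x := by
      rw [← hsum, Real.exp_sum]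
      apply Finset.prod_le_prod
      · intro i _; positivity
      · intro i _
        have := Real.add_one_le_exp (((b:ℝ)+1+(i:ℝ))/c - 1)
        linarith
    have hppos : (0:ℝ) < ∏ i ∈ Finset.range w, (((b:ℝ)+1+(i:ℝ))/c) := by
      apply Finset.prod_pos; intro i _; positivity
    have hfrac : c^(m+1+j)/(Nat.factorial (m+1+j) : ℝ)
        = (c^b/(Nat.factorial b : ℝ)) / (∏ i ∈ Finset.range w, (((b:ℝ)+1+(i:ℝ))/c)) := by
      rw [hbw, hfac, Finset.prod_div_distrib, Finset.prod_const, Finset.card_range]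
      rw [eq_div_iff (by positivity)]
      have hprodpos : (0:ℝ) < ∏ i ∈ Finset.range w, ((b:ℝ)+1+(i:ℝ)) := by
        apply Finset.prod_pos; intro i _; positivity
      field_simp
      rw [pow_add]
      ring
    rw [hfrac]
    have hstep1 : (c^b/(Nat.factorial b : ℝ)) / Real.exp x
        ≤ (c^b/(Nat.factorial b : ℝ)) / (∏ i ∈ Finset.range w, (((b:ℝ)+1+(i:ℝ))/c)) := by
      apply div_le_div_of_nonneg_left (by positivity) hppos hprod
    have hstep2 : c^b/(Nat.factorial b : ℝ) * (1 - x) ≤ (c^b/(Nat.factorial b : ℝ)) / Real.exp x := by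
      have h5 : 1 - x ≤ Real.exp (-x) := by
        have := Real.add_one_le_exp (-x); linarith
      have h6 : c^b/(Nat.factorial b : ℝ) * (1-x) ≤ c^b/(Nat.factorial b : ℝ) * Real.exp (-x) :=
        mul_le_mul_of_nonneg_left h5 (by positivity)
      have h7 : c^b/(Nat.factorial b : ℝ) * Real.exp (-x) = c^b/(Nat.factorial b : ℝ)/Real.exp x := by
        rw [Real.exp_neg]; ring
      linarith [h7 ▸ h6]
    linarith
  -- (4) sum the lower bounds
  have h4 : ∑ j ∈ Finset.range (m+1),
      c^(m-j)/(Nat.factorial (m-j) : ℝ) * (1 - ((2*(j:ℝ)+1))*((m:ℝ)+1-c)/c)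
      ≤ ∑ j ∈ Finset.range (m+1), c^(m+1+j)/(Nat.factorial (m+1+j) : ℝ) :=
    Finset.sum_le_sum h3
  -- (5) identities
  have hrefl : ∑ j ∈ Finset.range (m+1), c^(m-j)/(Nat.factorial (m-j) : ℝ) = S m c := by
    unfold S
    rw [← Finset.sum_range_reflect (fun k => c^k/(Nat.factorial k : ℝ)) (m+1)]
    apply Finset.sum_congr rfl
    intro j hj
    rw [show m+1-1-j = m-j from by omega]
  have hreflk : ∑ j ∈ Finset.range (m+1), (2*(j:ℝ)+1) * (c^(m-j)/(Nat.factorial (m-j) : ℝ))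
      = ∑ k ∈ Finset.range (m+1), (2*((m:ℝ)-(k:ℝ))+1) * (c^k/(Nat.factorial k : ℝ)) := by
    rw [← Finset.sum_range_reflect (fun k => (2*((m:ℝ)-(k:ℝ))+1) * (c^k/(Nat.factorial k : ℝ))) (m+1)]
    apply Finset.sum_congr rfl
    intro j hj
    have hjm : j ≤ m := Nat.lt_succ_iff.mp (Finset.mem_range.mp hj)
    rw [show m+1-1-j = m-j from by omega]
    have e2 : ((m-j:ℕ):ℝ) = (m:ℝ)-(j:ℝ) := by push_cast [Nat.cast_sub hjm]; ring
    rw [e2]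
    ring
  have hsumk : ∑ k ∈ Finset.range (m+1), (k:ℝ) * (c^k/(Nat.factorial k : ℝ))
      = c * ∑ k ∈ Finset.range m, c^k/(Nat.factorial k : ℝ) := by
    rw [Finset.sum_range_succ', Finset.mul_sum]
    simp only [Nat.cast_zero, zero_mul, add_zero]
    apply Finset.sum_congr rfl
    intro i _
    rw [Nat.factorial_succ]
    have h1 : (0:ℝ) < (Nat.factorial i : ℝ) := by positivity
    push_cast
    field_simp
    ring
  have hSm1 : ∑ k ∈ Finset.range m, c^k/(Nat.factorial k : ℝ) = S m c - c^m/(Nat.factorial m : ℝ) := by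
    unfold S; rw [Finset.sum_range_succ]; ring
  -- combine (4),(5)
  have hH0 : 0 ≤ S m c := S_nonneg m hc0.le
  have htau0 : 0 ≤ c^m/(Nat.factorial m : ℝ) := by positivity
  have hkey : ∑ j ∈ Finset.range (m+1),
      c^(m-j)/(Nat.factorial (m-j) : ℝ) * (1 - ((2*(j:ℝ)+1))*((m:ℝ)+1-c)/c)
      = S m c - (((m:ℝ)+1-c)/c) * ((2*(m:ℝ)+1)*S m c
          - 2*c*(S m c - c^m/(Nat.factorial m : ℝ))) := by
    have e1 : ∀ j ∈ Finset.range (m+1),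
        c^(m-j)/(Nat.factorial (m-j) : ℝ) * (1 - ((2*(j:ℝ)+1))*((m:ℝ)+1-c)/c)
        = c^(m-j)/(Nat.factorial (m-j) : ℝ)
          - (((m:ℝ)+1-c)/c) * ((2*(j:ℝ)+1) * (c^(m-j)/(Nat.factorial (m-j) : ℝ))) := by
      intro j _; ring
    rw [Finset.sum_congr rfl e1, Finset.sum_sub_distrib, ← Finset.mul_sum, hrefl, hreflk]
    have e2 : ∀ k ∈ Finset.range (m+1),
        (2*((m:ℝ)-(k:ℝ))+1) * (c^k/(Nat.factorial k : ℝ))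
        = (2*(m:ℝ)+1) * (c^k/(Nat.factorial k : ℝ)) - 2*((k:ℝ) * (c^k/(Nat.factorial k : ℝ))) := by
      intro k _; ring
    rw [Finset.sum_congr rfl e2, Finset.sum_sub_distrib, ← Finset.mul_sum, ← Finset.mul_sum,
      hsumk, hSm1]
    unfold S
    ring
  -- final numeric combination
  have hfin : S m c - (((m:ℝ)+1-c)/c) * ((2*(m:ℝ)+1)*S m c - 2*c*(S m c - c^m/(Nat.factorial m : ℝ)))
      ≥ S m c - 2*(1 - Real.log 2)*(c^m/(Nat.factorial m : ℝ)) := by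
    have ha : (m:ℝ)+1-c = 1 - Real.log 2 := by rw [hcc]; ring
    rw [ha]
    have h2m : (2*(m:ℝ)+1) - 2*c = 1 - 2*Real.log 2 := by rw [hcc]; ring
    have hexpand : ((1 - Real.log 2)/c) * ((2*(m:ℝ)+1)*S m c - 2*c*(S m c - c^m/(Nat.factorial m : ℝ)))
        = ((1 - Real.log 2)/c) * ((1 - 2*Real.log 2)*S m c) + 2*(1-Real.log 2)*(c^m/(Nat.factorial m : ℝ)) := by
      rw [hcc]
      have hc0' : (0:ℝ) < (m:ℝ) + Real.log 2 := by rw [hcc] at hc0; exact hc0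
      field_simp
      ring
    rw [hexpand]
    have hneg : ((1 - Real.log 2)/c) * ((1 - 2*Real.log 2)*S m c) ≤ 0 := by
      apply mul_nonpos_of_nonneg_of_nonpos
      · apply div_nonneg (by linarith) hc0.le
      · apply mul_nonpos_of_nonpos_of_nonneg (by linarith) hH0
    linarith
  linarith [h1, h2, h4, hkey, hfin]

set_option maxHeartbeats 1000000 in
lemma p_small (n : ℕ) (hn : 21 ≤ n) :
    (cc (n*n))^(n*n) / (Nat.factorial (n*n) : ℝ) * Real.exp (-(cc (n*n))) ≤ 3/(n:ℝ) := by
  have hL := Real.log_two_gt_d9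
  have hL2 := Real.log_two_lt_d9
  set m : ℕ := n*n with hmdef
  set D : ℕ := n/2 with hDdef
  have hD1 : 1 ≤ D := by omega
  have hDn : D ≤ n := by omega
  have hnm : n ≤ m := by rw [hmdef]; nlinarith
  have hDm : D ≤ m := le_trans hDn hnm
  have h2D : 2*D ≤ n := by omega
  have hD2 : n - 1 ≤ 2*D := by omega
  set c : ℝ := cc m with hcdef
  have hcc : c = (m:ℝ) + Real.log 2 := by rw [hcdef]; unfold cc; ring
  have hc0 : 0 < c := by rw [hcc]; positivity
  have hcm : (m:ℝ) ≤ c := by rw [hcc]; linarith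
  have hcm1 : c ≤ (m:ℝ) + 1 := by rw [hcc]; linarith
  have hnr : (21:ℝ) ≤ (n:ℝ) := by exact_mod_cast hn
  have hmr : ((m:ℕ):ℝ) = (n:ℝ)*(n:ℝ) := by rw [hmdef]; push_cast; ring
  have hnnc : (n:ℝ)*(n:ℝ) ≤ c := by rw [← hmr]; exact hcm
  have hDr : ((D:ℝ)) ≤ (n:ℝ)/2 := by
    have : ((2*D:ℕ):ℝ) ≤ ((n:ℕ):ℝ) := by exact_mod_cast h2D
    push_cast at this
    linarith
  have hDr2 : ((n:ℝ)-1)/2 ≤ (D:ℝ) := by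
    have h1 : ((n-1:ℕ):ℝ) ≤ ((2*D:ℕ):ℝ) := by exact_mod_cast hD2
    have h2 : ((n-1:ℕ):ℝ) = (n:ℝ) - 1 := by
      push_cast [Nat.cast_sub (by omega : 1 ≤ n)]; ring
    rw [h2] at h1
    push_cast at h1
    linarith
  have hDc : (D:ℝ)+1 ≤ c := by nlinarith
  have hfrac310 : ((D:ℝ))*((D:ℝ)+1)/c ≤ 3/10 := by
    rw [div_le_iff₀ hc0]
    nlinarith
  -- each term in window is ≥ (7/10) τ
  have hterm : ∀ k : ℕ, m-D ≤ k → k ≤ m →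
      (7:ℝ)/10 * (c^m/(Nat.factorial m : ℝ)) ≤ c^k/(Nat.factorial k : ℝ) := by
    intro k hk1 hk2
    have hkr : (m:ℝ) - (D:ℝ) ≤ (k:ℝ) := by
      have h1 : ((m-D:ℕ):ℝ) ≤ ((k:ℕ):ℝ) := by exact_mod_cast hk1
      have h2 : ((m-D:ℕ):ℝ) = (m:ℝ) - (D:ℝ) := by
        push_cast [Nat.cast_sub hDm]; ring
      linarith [h2 ▸ h1]
    have hfac : (Nat.factorial m : ℝ)
        = (Nat.factorial k : ℝ) * ∏ i ∈ Finset.range (m-k), ((k:ℝ)+1+i) := by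
      have := fac_prod k (m-k)
      rw [show k + (m-k) = m from by omega] at this
      exact this
    have hpp : (0:ℝ) < ∏ i ∈ Finset.range (m-k), ((k:ℝ)+1+i) := by
      apply Finset.prod_pos; intro i _; positivity
    have hppos : (0:ℝ) < ∏ i ∈ Finset.range (m-k), (((k:ℝ)+1+i)/c) := by
      apply Finset.prod_pos; intro i _; positivity
    have hPc : ∏ i ∈ Finset.range (m-k), (((k:ℝ)+1+i)/c)
        = (∏ i ∈ Finset.range (m-k), ((k:ℝ)+1+i))/c^(m-k) := by
      rw [Finset.prod_div_distrib, Finset.prod_const, Finset.card_range]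
    have hsplitpow : c^m = c^k * c^(m-k) := by
      rw [← pow_add]
      congr 1
      omega
    have hfrac : c^m/(Nat.factorial m : ℝ)
        = (c^k/(Nat.factorial k : ℝ)) / (∏ i ∈ Finset.range (m-k), (((k:ℝ)+1+i)/c)) := by
      rw [hPc, hfac, hsplitpow]
      have hck : (0:ℝ) < c^(m-k) := by positivity
      have hkf : (0:ℝ) < (Nat.factorial k : ℝ) := by positivity
      field_simp
    have hlow : (7:ℝ)/10 ≤ ∏ i ∈ Finset.range (m-k), (((k:ℝ)+1+i)/c) := by
      have hbase0 : (0:ℝ) ≤ 1 - ((D:ℝ)+1)/c := by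
        rw [sub_nonneg, div_le_one hc0]
        exact hDc
      have hbase1 : 1 - ((D:ℝ)+1)/c ≤ 1 := by
        have : (0:ℝ) ≤ ((D:ℝ)+1)/c := by positivity
        linarith
      have hstep1 : (1 - ((D:ℝ)+1)/c)^(m-k) ≤ ∏ i ∈ Finset.range (m-k), (((k:ℝ)+1+i)/c) := by
        have e : (1 - ((D:ℝ)+1)/c)^(m-k) = ∏ _i ∈ Finset.range (m-k), (1 - ((D:ℝ)+1)/c) := by
          rw [Finset.prod_const, Finset.card_range]
        rw [e]
        apply Finset.prod_le_prod
        · intro i _; exact hbase0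
        · intro i _
          have h1 : c - ((D:ℝ)+1) ≤ (k:ℝ)+1+(i:ℝ) := by
            have : (0:ℝ) ≤ (i:ℝ) := Nat.cast_nonneg i
            linarith
          have e2 : 1 - ((D:ℝ)+1)/c = (c - ((D:ℝ)+1))/c := by
            field_simp
          rw [e2, div_le_div_iff₀ hc0 hc0]
          nlinarith [h1, hc0]
      have hstep2 : (1 - ((D:ℝ)+1)/c)^D ≤ (1 - ((D:ℝ)+1)/c)^(m-k) :=
        pow_le_pow_of_le_one hbase0 hbase1 (by omega)
      have hstep3 : 1 - (D:ℝ)*(((D:ℝ)+1)/c) ≤ (1 - ((D:ℝ)+1)/c)^D := by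
        have h := one_add_mul_le_pow (a := -(((D:ℝ)+1)/c)) (by nlinarith [hbase0]) D
        have e3 : (1 + -(((D:ℝ)+1)/c))^D = (1 - ((D:ℝ)+1)/c)^D := by ring_nf
        have e4 : 1 + (D:ℝ) * -(((D:ℝ)+1)/c) = 1 - (D:ℝ)*(((D:ℝ)+1)/c) := by ring
        rw [e3, e4] at h
        exact h
      have h5 : (7:ℝ)/10 ≤ 1 - (D:ℝ)*(((D:ℝ)+1)/c) := by
        have e5 : (D:ℝ)*(((D:ℝ)+1)/c) = (D:ℝ)*((D:ℝ)+1)/c := by ring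
        rw [e5]
        linarith [hfrac310]
      linarith
    rw [hfrac]
    have hA : (0:ℝ) ≤ c^k/(Nat.factorial k : ℝ) := by positivity
    have hone : (7:ℝ)/10 / (∏ i ∈ Finset.range (m-k), (((k:ℝ)+1+i)/c)) ≤ 1 := by
      rw [div_le_one hppos]; exact hlow
    calc (7:ℝ)/10 * (c^k/(Nat.factorial k : ℝ) / (∏ i ∈ Finset.range (m-k), (((k:ℝ)+1+i)/c)))
        = (c^k/(Nat.factorial k : ℝ)) * ((7:ℝ)/10 / (∏ i ∈ Finset.range (m-k), (((k:ℝ)+1+i)/c))) := by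
          ring
      _ ≤ (c^k/(Nat.factorial k : ℝ)) * 1 := mul_le_mul_of_nonneg_left hone hA
      _ = c^k/(Nat.factorial k : ℝ) := mul_one _
  -- window sum
  have hwin : (D:ℝ) * ((7:ℝ)/10 * (c^m/(Nat.factorial m : ℝ)))
      ≤ ∑ k ∈ Finset.Ico (m-D) m, c^k/(Nat.factorial k : ℝ) := by
    have hcard : (Finset.Ico (m-D) m).card = D := by rw [Nat.card_Ico]; omega
    have hb : ∀ k ∈ Finset.Ico (m-D) m,
        (7:ℝ)/10 * (c^m/(Nat.factorial m : ℝ)) ≤ c^k/(Nat.factorial k : ℝ) := by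
      intro k hk
      obtain ⟨hk1, hk2⟩ := Finset.mem_Ico.mp hk
      exact hterm k hk1 (le_of_lt hk2)
    have := Finset.card_nsmul_le_sum (Finset.Ico (m-D) m)
      (fun k => c^k/(Nat.factorial k : ℝ)) ((7:ℝ)/10 * (c^m/(Nat.factorial m : ℝ))) hb
    rw [hcard, nsmul_eq_mul] at this
    exact this
  have hsub : ∑ k ∈ Finset.Ico (m-D) m, c^k/(Nat.factorial k : ℝ) ≤ S m c := by
    unfold S
    rw [Finset.range_eq_Ico]
    apply Finset.sum_le_sum_of_subset_of_nonneg
    · intro x hx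
      obtain ⟨h1, h2⟩ := Finset.mem_Ico.mp hx
      exact Finset.mem_Ico.mpr ⟨by omega, by omega⟩
    · intro i _ _; positivity
  have hexpS : S m c ≤ Real.exp c := S_le_exp m hc0.le
  have htau : (0:ℝ) < c^m/(Nat.factorial m : ℝ) := by positivity
  have h1 : (7:ℝ)/10 * (D:ℝ) * (c^m/(Nat.factorial m : ℝ)) ≤ Real.exp c := by
    calc (7:ℝ)/10 * (D:ℝ) * (c^m/(Nat.factorial m : ℝ))
        = (D:ℝ) * ((7:ℝ)/10 * (c^m/(Nat.factorial m : ℝ))) := by ring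
      _ ≤ _ := le_trans hwin (le_trans hsub hexpS)
  have h2 : c^m/(Nat.factorial m : ℝ) * Real.exp (-c) = (c^m/(Nat.factorial m : ℝ)) / Real.exp c := by
    rw [Real.exp_neg]; ring
  rw [h2, div_le_div_iff₀ (Real.exp_pos c) (by linarith : (0:ℝ) < (n:ℝ))]
  have h3 : ((n:ℝ)-1)/2 * (c^m/(Nat.factorial m : ℝ)) ≤ (D:ℝ) * (c^m/(Nat.factorial m : ℝ)) :=
    mul_le_mul_of_nonneg_right hDr2 htau.le
  nlinarith [h1, h3, htau, hnr]

lemma q_mono {a b : ℕ} (ha : 5 ≤ a) (hab : a ≤ b) : q a ≤ q b := by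
  induction b, hab using Nat.le_induction with
  | base => exact le_rfl
  | succ b hb ih =>
    refine le_trans ih ?_
    obtain ⟨k, rfl⟩ : ∃ k, b = k+5 := ⟨b-5, by omega⟩
    exact q_step k

lemma q_big_bound (n : ℕ) (hn : 21 ≤ n) : q (n*n) ≤ 1/2 + 3/(n:ℝ) := by
  have hgap := gap (n*n) (by nlinarith)
  have hp := p_small n hn
  have hL := Real.log_two_gt_d9
  have hL2 := Real.log_two_lt_d9
  set c : ℝ := cc (n*n) with hcdef
  set τ : ℝ := c^(n*n)/(Nat.factorial (n*n) : ℝ) with htdef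
  have htau : (0:ℝ) ≤ τ := by
    rw [htdef]
    have hcc : c = ((n*n:ℕ):ℝ) + Real.log 2 := by rw [hcdef]; unfold cc; ring
    have hc0 : (0:ℝ) < c := by rw [hcc]; positivity
    positivity
  have hq : q (n*n) = Real.exp (-c) * S (n*n) c := by rw [hcdef]; unfold q; rfl
  have hepos : (0:ℝ) < Real.exp (-c) := Real.exp_pos _
  have hmul : Real.exp (-c) * Real.exp c = 1 := by
    rw [← Real.exp_add]; simp
  have h2S : 2 * S (n*n) c ≤ Real.exp c + 2*(1 - Real.log 2)*τ := by linarith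
  have h3 : Real.exp (-c) * (2 * S (n*n) c) ≤ Real.exp (-c) * (Real.exp c + 2*(1 - Real.log 2)*τ) :=
    mul_le_mul_of_nonneg_left h2S hepos.le
  have h4 : Real.exp (-c) * (Real.exp c + 2*(1 - Real.log 2)*τ)
      = 1 + 2*(1 - Real.log 2)*(τ * Real.exp (-c)) := by
    nlinarith [hmul]
  have h5 : τ * Real.exp (-c) ≤ 3/(n:ℝ) := hp
  have h6 : (0:ℝ) ≤ τ * Real.exp (-c) := mul_nonneg htau hepos.le
  have h7 : 2*(1 - Real.log 2)*(τ * Real.exp (-c)) ≤ 2 * (3/(n:ℝ)) := by nlinarith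
  rw [hq]
  nlinarith [h3, h4, h7]

lemma q_le_half (m : ℕ) : q m ≤ 1/2 := by
  by_cases h5 : 5 ≤ m
  · by_contra hq
    push_neg at hq
    set ε : ℝ := q m - 1/2 with hedef
    have hε : 0 < ε := by rw [hedef]; linarith
    obtain ⟨n, hn⟩ := exists_nat_gt (max (21:ℝ) (max (m:ℝ) (3/ε)))
    have hn21 : 21 ≤ n := by
      have : (21:ℝ) < (n:ℝ) := lt_of_le_of_lt (le_max_left _ _) hn
      exact_mod_cast this.le
    have hnm : m ≤ n*n := by
      have h1 : (m:ℝ) < (n:ℝ) := lt_of_le_of_lt (le_trans (le_max_left _ _) (le_max_right _ _)) hn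
      have h2 : m ≤ n := by exact_mod_cast h1.le
      calc m ≤ n := h2
        _ ≤ n*n := Nat.le_mul_of_pos_left n (by omega)
    have hchain : q m ≤ q (n*n) := q_mono h5 hnm
    have hbound := q_big_bound n hn21
    have hne : 3/ε < (n:ℝ) := lt_of_le_of_lt (le_trans (le_max_right _ _) (le_max_right _ _)) hn
    have hn0 : (0:ℝ) < (n:ℝ) := by positivity
    have hlt : 3/(n:ℝ) < ε := by
      rw [div_lt_iff₀ hn0]
      rw [div_lt_iff₀ hε] at hne
      linarith
    have : q m < q m := by
      calc q m ≤ q (n*n) := hchain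
        _ ≤ 1/2 + 3/(n:ℝ) := hbound
        _ < 1/2 + ε := by linarith
        _ = q m := by rw [hedef]; ring
    exact absurd this (lt_irrefl _)
  · push_neg at h5
    have hL := Real.log_two_gt_d9
    have hL2 := Real.log_two_lt_d9
    have hE := Real.exp_one_gt_d9
    have key : S m (cc m) ≤ Real.exp (m:ℝ) := by
      have hc0 : (0:ℝ) ≤ cc m := cc_nonneg m
      have hcc : cc m = (m:ℝ) + Real.log 2 := by unfold cc; ring
      interval_cases m
      · unfold S
        norm_num [Nat.factorial]
      · have hub : cc 1 ≤ 1.6931471808 := by rw [hcc]; push_cast; linarith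
        unfold S
        rw [Finset.sum_range_succ, Finset.sum_range_succ]
        norm_num [Nat.factorial]
        nlinarith [hub, hE]
      · have hub : cc 2 ≤ 2.6931471808 := by rw [hcc]; push_cast; linarith
        have hc0' : (0:ℝ) ≤ cc 2 := hc0
        have hexp2 : Real.exp ((2:ℕ):ℝ) = (Real.exp 1)^2 := by
          rw [show ((2:ℕ):ℝ) = ((2:ℕ):ℝ)*(1:ℝ) by norm_num, Real.exp_nat_mul]
        have hp2 : (cc 2)^2 ≤ 2.6931471808^2 := pow_le_pow_left₀ hc0' hub 2
        have hq2 : (2.7182818283:ℝ)^2 ≤ (Real.exp 1)^2 := pow_le_pow_left₀ (by norm_num) hE.le 2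
        unfold S
        rw [Finset.sum_range_succ, Finset.sum_range_succ, Finset.sum_range_succ]
        norm_num [Nat.factorial]
        rw [show ((2:ℝ):ℝ) = ((2:ℕ):ℝ) by norm_num, hexp2]
        nlinarith [hub, hp2, hq2]
      · have hub : cc 3 ≤ 3.6931471808 := by rw [hcc]; push_cast; linarith
        have hc0' : (0:ℝ) ≤ cc 3 := hc0
        have hexp3 : Real.exp ((3:ℕ):ℝ) = (Real.exp 1)^3 := by
          rw [show ((3:ℕ):ℝ) = ((3:ℕ):ℝ)*(1:ℝ) by norm_num, Real.exp_nat_mul]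
        have hp2 : (cc 3)^2 ≤ 3.6931471808^2 := pow_le_pow_left₀ hc0' hub 2
        have hp3 : (cc 3)^3 ≤ 3.6931471808^3 := pow_le_pow_left₀ hc0' hub 3
        have hq3 : (2.7182818283:ℝ)^3 ≤ (Real.exp 1)^3 := pow_le_pow_left₀ (by norm_num) hE.le 3
        unfold S
        rw [Finset.sum_range_succ, Finset.sum_range_succ, Finset.sum_range_succ,
          Finset.sum_range_succ]
        norm_num [Nat.factorial]
        rw [show ((3:ℝ):ℝ) = ((3:ℕ):ℝ) by norm_num, hexp3]
        nlinarith [hub, hp2, hp3, hq3]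
      · have hub : cc 4 ≤ 4.6931471808 := by rw [hcc]; push_cast; linarith
        have hc0' : (0:ℝ) ≤ cc 4 := hc0
        have hexp4 : Real.exp ((4:ℕ):ℝ) = (Real.exp 1)^4 := by
          rw [show ((4:ℕ):ℝ) = ((4:ℕ):ℝ)*(1:ℝ) by norm_num, Real.exp_nat_mul]
        have hp2 : (cc 4)^2 ≤ 4.6931471808^2 := pow_le_pow_left₀ hc0' hub 2
        have hp3 : (cc 4)^3 ≤ 4.6931471808^3 := pow_le_pow_left₀ hc0' hub 3
        have hp4 : (cc 4)^4 ≤ 4.6931471808^4 := pow_le_pow_left₀ hc0' hub 4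
        have hq4 : (2.7182818283:ℝ)^4 ≤ (Real.exp 1)^4 := pow_le_pow_left₀ (by norm_num) hE.le 4
        unfold S
        rw [Finset.sum_range_succ, Finset.sum_range_succ, Finset.sum_range_succ,
          Finset.sum_range_succ, Finset.sum_range_succ]
        norm_num [Nat.factorial]
        rw [show ((4:ℝ):ℝ) = ((4:ℕ):ℝ) by norm_num, hexp4]
        nlinarith [hub, hp2, hp3, hp4, hq4]
    unfold q
    have h1 : Real.exp (-(cc m)) * S m (cc m) ≤ Real.exp (-(cc m)) * Real.exp (m:ℝ) :=
      mul_le_mul_of_nonneg_left key (Real.exp_pos _).le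
    have h2 : Real.exp (-(cc m)) * Real.exp (m:ℝ) = 1/2 := by
      rw [← Real.exp_add]
      have e : -(cc m) + (m:ℝ) = -Real.log 2 := by unfold cc; ring
      rw [e, Real.exp_neg, Real.exp_log (by norm_num : (0:ℝ) < 2)]
      norm_num
    linarith [h2 ▸ h1]

lemma main_part1 (m : ℕ) : ∀ t : ℝ, (m : ℝ) + Real.log 2 ≤ t →
    2 * (∑ k ∈ Finset.range (m+1), t ^ k / (Nat.factorial k : ℝ)) - Real.exp t ≤ 0 := by
  intro t ht
  have hc : cc m = (m:ℝ) + Real.log 2 := by unfold cc; ring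
  have h0 : 0 ≤ cc m := cc_nonneg m
  have ha : Real.exp (-t) * S m t ≤ Real.exp (-(cc m)) * S m (cc m) :=
    expS_antitone m h0 (by rw [hc]; exact ht)
  have hhalf : Real.exp (-t) * S m t ≤ 1/2 := le_trans ha (q_le_half m)
  have het : (0:ℝ) < Real.exp t := Real.exp_pos t
  have hid : Real.exp t * (Real.exp (-t) * S m t) = S m t := by
    rw [← mul_assoc, ← Real.exp_add]
    simp
  have h2 : Real.exp t * (Real.exp (-t) * S m t) ≤ Real.exp t * (1/2) :=
    mul_le_mul_of_nonneg_left hhalf het.le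
  have h3 : S m t ≤ Real.exp t / 2 := by rw [← hid]; linarith
  have hS : S m t = ∑ k ∈ Finset.range (m+1), t ^ k / (Nat.factorial k : ℝ) := rfl
  linarith [hS ▸ h3]

lemma main_part2 (m : ℕ) : ∀ t : ℝ, t ∈ Set.Icc (0:ℝ) ((m : ℝ) + Real.log 2) →
    2 * (∑ k ∈ Finset.range (m+1), t ^ k / (Nat.factorial k : ℝ)) - Real.exp t
      ≤ 2 * Real.exp m := by
  intro t ht
  obtain ⟨ht0, ht1⟩ := ht
  have h1 : ∑ k ∈ Finset.range (m+1), t ^ k / (Nat.factorial k : ℝ) ≤ Real.exp t :=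
    S_le_exp m ht0
  have h2 : Real.exp t ≤ Real.exp ((m:ℝ) + Real.log 2) := Real.exp_le_exp.mpr ht1
  have h3 : Real.exp ((m:ℝ) + Real.log 2) = 2 * Real.exp m := by
    rw [Real.exp_add, Real.exp_log (by norm_num : (0:ℝ) < 2)]
    ring
  linarith

end Stmt10

/-- For `F_m(t) = 2 ∑_{k=0}^m t^k/k! - e^t`:
`F_m(t) ≤ 0` for `t ≥ m + log 2`, `F_m(t) ≤ 2 e^m` on `[0, m + log 2]`,
and hence `F_m(t) ≤ 2 e^m` for all `t ≥ 0`. -/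
theorem stmt10 (m : ℕ) :
    (∀ t : ℝ, (m : ℝ) + Real.log 2 ≤ t →
      2 * (∑ k ∈ Finset.range (m+1), t ^ k / (Nat.factorial k : ℝ)) - Real.exp t ≤ 0) ∧
    (∀ t : ℝ, t ∈ Set.Icc (0:ℝ) ((m : ℝ) + Real.log 2) →
      2 * (∑ k ∈ Finset.range (m+1), t ^ k / (Nat.factorial k : ℝ)) - Real.exp t
        ≤ 2 * Real.exp m) ∧
    (∀ t : ℝ, 0 ≤ t →
      2 * (∑ k ∈ Finset.range (m+1), t ^ k / (Nat.factorial k : ℝ)) - Real.exp t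
        ≤ 2 * Real.exp m) := by
  refine ⟨Stmt10.main_part1 m, Stmt10.main_part2 m, ?_⟩
  intro t ht0
  by_cases hcmp : t ≤ (m:ℝ) + Real.log 2
  · exact Stmt10.main_part2 m t ⟨ht0, hcmp⟩
  · have h1 := Stmt10.main_part1 m t (le_of_not_ge hcmp)
    have h2 : (0:ℝ) ≤ 2 * Real.exp m := by positivity
    linarith
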